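/- Let α, β, γ be real constants with β ≠ 0 and γ ≠ 0, let p1 : ℝ → ℝ be smooth and nonvanishing, and set p2 = −(α/β)p1, q1 = −8α p1, q2 = (4/γ)p1, r1 = α/β, r2 = 4α²γ/β. Define D(x,y) = 1 + αx² + βy², ψ(t,x,y) = 1/D(x,y) and w(t,x,y) = ∂/∂y (2αγ y/D(x,y)) = 2αγ(1 + αx² − βy²)/D(x,y)². Then at every point (t,x,y) with D(x,y) ≠ 0 the pair (ψ, w) satisfies the vcDS system: i ψ_t + p1 ψ_xx + p2 ψ_yy = q1|ψ|²ψ + q2 ψ w and w_xx + r1 w_yy = r2(|ψ|²)_yy (a stationary lump-type solution). -/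

import Mathlib

noncomputable section


lemma quadD (k m s : ℝ) : HasDerivAt (fun u : ℝ => k + m*u^2) (2*m*s) s := by
  have h := ((hasDerivAt_pow 2 s).const_mul m).const_add k
  refine h.congr_deriv ?_
  push_cast
  ring

lemma linD (c s : ℝ) : HasDerivAt (fun u : ℝ => c*u) c s := by
  simpa using (hasDerivAt_id s).const_mul c

lemma ratD1 (k m s : ℝ) (h : k + m*s^2 ≠ 0) {P : ℝ → ℝ} {P' : ℝ}
    (hP : HasDerivAt P P' s) :
    HasDerivAt (fun u => P u / (k + m*u^2))
      ((P' * (k + m*s^2) - P s * (2*m*s)) / (k + m*s^2)^2) s :=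
  hP.div (quadD k m s) h

lemma ratD2 (k m s : ℝ) (h : k + m*s^2 ≠ 0) {P : ℝ → ℝ} {P' : ℝ}
    (hP : HasDerivAt P P' s) :
    HasDerivAt (fun u => P u / (k + m*u^2)^2)
      ((P' * (k + m*s^2) - P s * (4*m*s)) / (k + m*s^2)^3) s := by
  have h2 : HasDerivAt (fun u : ℝ => (k + m*u^2)^2) (2*(k+m*s^2)*(2*m*s)) s := by
    have := (quadD k m s).fun_pow 2
    refine this.congr_deriv ?_
    try { push_cast; ring }
  have := hP.fun_div h2 (pow_ne_zero 2 h)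
  refine this.congr_deriv ?_
  field_simp
  ring

lemma ratD3 (k m s : ℝ) (h : k + m*s^2 ≠ 0) {P : ℝ → ℝ} {P' : ℝ}
    (hP : HasDerivAt P P' s) :
    HasDerivAt (fun u => P u / (k + m*u^2)^3)
      ((P' * (k + m*s^2) - P s * (6*m*s)) / (k + m*s^2)^4) s := by
  have h2 : HasDerivAt (fun u : ℝ => (k + m*u^2)^3) (3*(k+m*s^2)^2*(2*m*s)) s := by
    have := (quadD k m s).fun_pow 3
    refine this.congr_deriv ?_
    try { push_cast; ring }
  have := hP.fun_div h2 (pow_ne_zero 3 h)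
  refine this.congr_deriv ?_
  field_simp
  ring

lemma deriv2_congrR (f g q : ℝ → ℝ) (hq : Continuous q) (s : ℝ) (hs : q s ≠ 0)
    (hev : ∀ u, q u ≠ 0 → deriv f u = g u) {g' : ℝ} (hg : HasDerivAt g g' s) :
    deriv (fun u => deriv f u) s = g' := by
  show deriv (deriv f) s = g'
  have h0 : ∀ᶠ u in nhds s, q u ≠ 0 := (hq.continuousAt).eventually_ne hs
  have h1 : deriv f =ᶠ[nhds s] g := h0.mono hev
  rw [h1.deriv_eq]
  exact hg.deriv

lemma deriv2_congrC (f g : ℝ → ℂ) (q : ℝ → ℝ) (hq : Continuous q) (s : ℝ) (hs : q s ≠ 0)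
    (hev : ∀ u, q u ≠ 0 → deriv f u = g u) {g' : ℂ} (hg : HasDerivAt g g' s) :
    deriv (fun u => deriv f u) s = g' := by
  show deriv (deriv f) s = g'
  have h0 : ∀ᶠ u in nhds s, q u ≠ 0 := (hq.continuousAt).eventually_ne hs
  have h1 : deriv f =ᶠ[nhds s] g := h0.mono hev
  rw [h1.deriv_eq]
  exact hg.deriv



/-- Partial derivative in the first (time) variable. -/
def dt3 (f : ℝ → ℝ → ℝ → ℂ) : ℝ → ℝ → ℝ → ℂ := fun t x y => deriv (fun s => f s x y) t

/-- Partial derivative in the second (x) variable. -/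
def dx3 (f : ℝ → ℝ → ℝ → ℂ) : ℝ → ℝ → ℝ → ℂ := fun t x y => deriv (fun s => f t s y) x

/-- Partial derivative in the third (y) variable. -/
def dy3 (f : ℝ → ℝ → ℝ → ℂ) : ℝ → ℝ → ℝ → ℂ := fun t x y => deriv (fun s => f t x s) y

/-- Partial derivative in the second (x) variable, real-valued functions. -/
def rx3 (f : ℝ → ℝ → ℝ → ℝ) : ℝ → ℝ → ℝ → ℝ := fun t x y => deriv (fun s => f t s y) x

/-- Partial derivative in the third (y) variable, real-valued functions. -/
def ry3 (f : ℝ → ℝ → ℝ → ℝ) : ℝ → ℝ → ℝ → ℝ := fun t x y => deriv (fun s => f t x s) y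

/-- Smoothness of a complex-valued function of (t,x,y). -/
def Smooth3C (f : ℝ → ℝ → ℝ → ℂ) : Prop :=
  ContDiff ℝ (⊤ : ℕ∞) (fun p : ℝ × ℝ × ℝ => f p.1 p.2.1 p.2.2)

/-- Smoothness of a real-valued function of (t,x,y). -/
def Smooth3R (f : ℝ → ℝ → ℝ → ℝ) : Prop :=
  ContDiff ℝ (⊤ : ℕ∞) (fun p : ℝ × ℝ × ℝ => f p.1 p.2.1 p.2.2)

/-- The Davey–Stewartson system with constants ε₁, ε₂, δ₁, δ₂ holds at the point (t,x,y):
`i ψ_t + ψ_xx + ε₁ ψ_yy = ε₂ |ψ|² ψ + ψ w`, `w_xx + δ₁ w_yy = δ₂ (|ψ|²)_yy`. -/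
def DSAt (ε1 ε2 δ1 δ2 : ℝ) (ψ : ℝ → ℝ → ℝ → ℂ) (w : ℝ → ℝ → ℝ → ℝ)
    (t x y : ℝ) : Prop :=
  Complex.I * dt3 ψ t x y + dx3 (dx3 ψ) t x y + (ε1 : ℂ) * dy3 (dy3 ψ) t x y
      = (ε2 : ℂ) * ‖ψ t x y‖^2 * ψ t x y + ψ t x y * (w t x y : ℂ)
    ∧ rx3 (rx3 w) t x y + δ1 * ry3 (ry3 w) t x y
      = δ2 * ry3 (ry3 (fun t x y => ‖ψ t x y‖^2)) t x y

/-- (ψ, w) is a solution of the Davey–Stewartson system everywhere. -/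
def IsDSSolution (ε1 ε2 δ1 δ2 : ℝ) (ψ : ℝ → ℝ → ℝ → ℂ) (w : ℝ → ℝ → ℝ → ℝ) : Prop :=
  ∀ t x y : ℝ, DSAt ε1 ε2 δ1 δ2 ψ w t x y

/-- The variable coefficient Davey–Stewartson system with coefficient functions
p₁,p₂,q₁,q₂,r₁,r₂ of t holds at the point (t,x,y):
`i ψ_t + p₁ψ_xx + p₂ψ_yy = q₁|ψ|²ψ + q₂ψw`, `w_xx + r₁w_yy = r₂(|ψ|²)_yy`. -/
def vcDSAt (p1 p2 q1 q2 r1 r2 : ℝ → ℝ) (ψ : ℝ → ℝ → ℝ → ℂ) (w : ℝ → ℝ → ℝ → ℝ)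
    (t x y : ℝ) : Prop :=
  Complex.I * dt3 ψ t x y + (p1 t : ℂ) * dx3 (dx3 ψ) t x y
      + (p2 t : ℂ) * dy3 (dy3 ψ) t x y
      = (q1 t : ℂ) * ‖ψ t x y‖^2 * ψ t x y
        + (q2 t : ℂ) * ψ t x y * (w t x y : ℂ)
    ∧ rx3 (rx3 w) t x y + r1 t * ry3 (ry3 w) t x y
      = r2 t * ry3 (ry3 (fun t x y => ‖ψ t x y‖^2)) t x y

/-- (ψ, w) is a solution of the vcDS system everywhere. -/
def IsVcDSSolution (p1 p2 q1 q2 r1 r2 : ℝ → ℝ)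
    (ψ : ℝ → ℝ → ℝ → ℂ) (w : ℝ → ℝ → ℝ → ℝ) : Prop :=
  ∀ t x y : ℝ, vcDSAt p1 p2 q1 q2 r1 r2 ψ w t x y

/-- the stationary lump-type solution of the vcDS system. -/
theorem vcds_lump_solution
    (α β γ : ℝ) (hβ : β ≠ 0) (hγ : γ ≠ 0)
    (p1 : ℝ → ℝ) (hp1 : ContDiff ℝ (⊤ : ℕ∞) p1) (hp1ne : ∀ t : ℝ, p1 t ≠ 0)
    (p2 q1 q2 r1 r2 : ℝ → ℝ)
    (hp2 : ∀ t : ℝ, p2 t = -(α/β) * p1 t)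
    (hq1 : ∀ t : ℝ, q1 t = -8 * α * p1 t)
    (hq2 : ∀ t : ℝ, q2 t = (4/γ) * p1 t)
    (hr1 : ∀ t : ℝ, r1 t = α/β)
    (hr2 : ∀ t : ℝ, r2 t = 4 * α^2 * γ / β)
    (ψ : ℝ → ℝ → ℝ → ℂ) (w : ℝ → ℝ → ℝ → ℝ)
    (hψ : ∀ t x y : ℝ, ψ t x y = ((1 / (1 + α * x^2 + β * y^2) : ℝ) : ℂ))
    (hw : ∀ t x y : ℝ, w t x y =
      2 * α * γ * (1 + α * x^2 - β * y^2) / (1 + α * x^2 + β * y^2)^2) :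
    ∀ t x y : ℝ, 1 + α * x^2 + β * y^2 ≠ 0 →
      (deriv (fun s => 2 * α * γ * s / (1 + α * x^2 + β * s^2)) y = w t x y)
      ∧ vcDSAt p1 p2 q1 q2 r1 r2 ψ w t x y := by
  intro t x y hD
  have hDy : (1 + α*x^2) + β*y^2 ≠ 0 := by
    have e : (1 + α*x^2) + β*y^2 = 1 + α * x^2 + β * y^2 := by ring
    rw [e]; exact hD
  have hDx : (1 + β*y^2) + α*x^2 ≠ 0 := by
    have e : (1 + β*y^2) + α*x^2 = 1 + α * x^2 + β * y^2 := by ring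
    rw [e]; exact hD
  have hcx : Continuous (fun u : ℝ => (1+β*y^2) + α*u^2) :=
    continuous_const.add (continuous_const.mul (continuous_pow 2))
  have hcy : Continuous (fun u : ℝ => (1+α*x^2) + β*u^2) :=
    continuous_const.add (continuous_const.mul (continuous_pow 2))
  -- section functions of ψ and w
  have hfx : (fun s => ψ t s y) = (fun u : ℝ => ((1 / ((1+β*y^2) + α*u^2) : ℝ) : ℂ)) := by
    funext s; rw [hψ]
    exact congrArg Complex.ofReal (by ring)
  have hfy : (fun s => ψ t x s) = (fun u : ℝ => ((1 / ((1+α*x^2) + β*u^2) : ℝ) : ℂ)) := by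
    funext s; rw [hψ]
  have hfwx : (fun s => w t s y)
      = (fun u : ℝ => ((2*α*γ - 2*α*β*γ*y^2) + (2*α^2*γ)*u^2) / ((1+β*y^2) + α*u^2)^2) := by
    funext s; rw [hw]; ring
  have hfwy : (fun s => w t x s)
      = (fun u : ℝ => ((2*α*γ + 2*α^2*γ*x^2) + (-(2*α*β*γ))*u^2) / ((1+α*x^2) + β*u^2)^2) := by
    funext s; rw [hw]; ring
  have hf2 : (fun s => ‖ψ t x s‖^2)
      = (fun u : ℝ => 1 / ((1+α*x^2) + β*u^2)^2) := by
    funext s; rw [hψ, Complex.norm_real, Real.norm_eq_abs, _root_.sq_abs, div_pow, one_pow]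
  -- first derivative formulas on the nonvanishing set
  have hevx : ∀ u, (1+β*y^2) + α*u^2 ≠ 0 → deriv (fun s => ψ t s y) u
      = ((-(2*α)*u / ((1+β*y^2) + α*u^2)^2 : ℝ) : ℂ) := by
    intro u hu
    rw [hfx, ((ratD1 (1+β*y^2) α u hu (hasDerivAt_const u (1:ℝ))).ofReal_comp).deriv,
      Complex.ofReal_inj]
    ring
  have hevy : ∀ u, (1+α*x^2) + β*u^2 ≠ 0 → deriv (fun s => ψ t x s) u
      = ((-(2*β)*u / ((1+α*x^2) + β*u^2)^2 : ℝ) : ℂ) := by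
    intro u hu
    rw [hfy, ((ratD1 (1+α*x^2) β u hu (hasDerivAt_const u (1:ℝ))).ofReal_comp).deriv,
      Complex.ofReal_inj]
    ring
  have hevwx : ∀ u, (1+β*y^2) + α*u^2 ≠ 0 → deriv (fun s => w t s y) u
      = (2*(2*α^2*γ)*u*((1+β*y^2) + α*u^2)
          - ((2*α*γ - 2*α*β*γ*y^2) + (2*α^2*γ)*u^2)*(4*α*u)) / ((1+β*y^2) + α*u^2)^3 := by
    intro u hu
    rw [hfwx, (ratD2 (1+β*y^2) α u hu (quadD (2*α*γ - 2*α*β*γ*y^2) (2*α^2*γ) u)).deriv]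
  have hevwy : ∀ u, (1+α*x^2) + β*u^2 ≠ 0 → deriv (fun s => w t x s) u
      = (2*(-(2*α*β*γ))*u*((1+α*x^2) + β*u^2)
          - ((2*α*γ + 2*α^2*γ*x^2) + (-(2*α*β*γ))*u^2)*(4*β*u)) / ((1+α*x^2) + β*u^2)^3 := by
    intro u hu
    rw [hfwy, (ratD2 (1+α*x^2) β u hu (quadD (2*α*γ + 2*α^2*γ*x^2) (-(2*α*β*γ)) u)).deriv]
  have hev2 : ∀ u, (1+α*x^2) + β*u^2 ≠ 0 → deriv (fun s => ‖ψ t x s‖^2) u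
      = -(4*β)*u / ((1+α*x^2) + β*u^2)^3 := by
    intro u hu
    rw [hf2, (ratD2 (1+α*x^2) β u hu (hasDerivAt_const u (1:ℝ))).deriv]
    ring
  -- second derivatives
  have hdt : deriv (fun s => ψ s x y) t = 0 := by
    have e : (fun s => ψ s x y) = fun _ => ((1 / (1 + α*x^2 + β*y^2) : ℝ) : ℂ) :=
      funext fun s => hψ s x y
    rw [e]; exact deriv_const t _
  have hdxx : deriv (fun s => deriv (fun u => ψ t u y) s) x
      = (((-(2*α)*(1 + α*x^2 + β*y^2) + 8*α^2*x^2) / (1 + α*x^2 + β*y^2)^3 : ℝ) : ℂ) := by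
    rw [deriv2_congrC (fun s => ψ t s y)
      (fun u => ((-(2*α)*u / ((1+β*y^2) + α*u^2)^2 : ℝ) : ℂ))
      (fun u => (1+β*y^2) + α*u^2) hcx x hDx hevx
      ((ratD2 (1+β*y^2) α x hDx (linD (-(2*α)) x)).ofReal_comp), Complex.ofReal_inj]
    field_simp
    ring
  have hdyy : deriv (fun s => deriv (fun u => ψ t x u) s) y
      = (((-(2*β)*(1 + α*x^2 + β*y^2) + 8*β^2*y^2) / (1 + α*x^2 + β*y^2)^3 : ℝ) : ℂ) := by
    rw [deriv2_congrC (fun s => ψ t x s)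
      (fun u => ((-(2*β)*u / ((1+α*x^2) + β*u^2)^2 : ℝ) : ℂ))
      (fun u => (1+α*x^2) + β*u^2) hcy y hDy hevy
      ((ratD2 (1+α*x^2) β y hDy (linD (-(2*β)) y)).ofReal_comp), Complex.ofReal_inj]
    field_simp
    ring
  have hwxx : deriv (fun s => deriv (fun u => w t u y) s) x
      = (4*α^2*γ*(((1+α*x^2+β*y^2) - 2*(1+α*x^2-β*y^2) - 2*α*x^2)*(1+α*x^2+β*y^2)
          - 6*α*x^2*((1+α*x^2+β*y^2) - 2*(1+α*x^2-β*y^2)))) / (1+α*x^2+β*y^2)^4 := by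
    rw [deriv2_congrR (fun s => w t s y)
      (fun u => (2*(2*α^2*γ)*u*((1+β*y^2) + α*u^2)
          - ((2*α*γ - 2*α*β*γ*y^2) + (2*α^2*γ)*u^2)*(4*α*u)) / ((1+β*y^2) + α*u^2)^3)
      (fun u => (1+β*y^2) + α*u^2) hcx x hDx hevwx
      (ratD3 (1+β*y^2) α x hDx
        (((linD (2*(2*α^2*γ)) x).mul (quadD (1+β*y^2) α x)).sub
          ((quadD (2*α*γ - 2*α*β*γ*y^2) (2*α^2*γ) x).mul (linD (4*α) x))))]
    field_simp
    ring
  have hwyy : deriv (fun s => deriv (fun u => w t x u) s) y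
      = (-(4*α*β*γ)*(((1+α*x^2+β*y^2) + 2*(1+α*x^2-β*y^2) - 2*β*y^2)*(1+α*x^2+β*y^2)
          - 6*β*y^2*((1+α*x^2+β*y^2) + 2*(1+α*x^2-β*y^2)))) / (1+α*x^2+β*y^2)^4 := by
    rw [deriv2_congrR (fun s => w t x s)
      (fun u => (2*(-(2*α*β*γ))*u*((1+α*x^2) + β*u^2)
          - ((2*α*γ + 2*α^2*γ*x^2) + (-(2*α*β*γ))*u^2)*(4*β*u)) / ((1+α*x^2) + β*u^2)^3)
      (fun u => (1+α*x^2) + β*u^2) hcy y hDy hevwy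
      (ratD3 (1+α*x^2) β y hDy
        (((linD (2*(-(2*α*β*γ))) y).mul (quadD (1+α*x^2) β y)).sub
          ((quadD (2*α*γ + 2*α^2*γ*x^2) (-(2*α*β*γ)) y).mul (linD (4*β) y))))]
    field_simp
    ring
  have hp2yy : deriv (fun s => deriv (fun u => ‖ψ t x u‖^2) s) y
      = (-(4*β)*(1+α*x^2+β*y^2) + 24*β^2*y^2) / (1+α*x^2+β*y^2)^4 := by
    rw [deriv2_congrR (fun s => ‖ψ t x s‖^2)
      (fun u => -(4*β)*u / ((1+α*x^2) + β*u^2)^3)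
      (fun u => (1+α*x^2) + β*u^2) hcy y hDy hev2
      (ratD3 (1+α*x^2) β y hDy (linD (-(4*β)) y))]
    field_simp
    ring
  refine ⟨?_, ?_, ?_⟩
  · -- the y-derivative identity for w
    rw [(ratD1 (1+α*x^2) β y hDy (linD (2*α*γ) y)).deriv, hw]
    field_simp
    ring
  · -- first vcDS equation
    simp only [vcDSAt, dt3, dx3, dy3] at *
    rw [hdt, hdxx, hdyy, hψ, hw, hp2, hq1, hq2, Complex.norm_real, Real.norm_eq_abs, mul_zero, zero_add]
    rw [← Complex.ofReal_pow, _root_.sq_abs]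
    norm_cast
    field_simp
    push_cast [Int.cast_negSucc]
    ring
  · -- second vcDS equation
    simp only [rx3, ry3]
    rw [hwxx, hwyy, hp2yy, hr1, hr2]
    field_simp
    ring
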